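/- Let T be an operator on a finite-dimensional complex Hilbert space with 0 ≤ T ≤ I, let Π be an orthogonal projection, and let c ∈ [0,1] be a real number satisfying Π T Π ≤ c Π. Then for every density operator ρ on the same space, Tr[Tρ] ≤ (√(c · Tr[Πρ]) + √(1 − Tr[Πρ]))². -/

import Mathlib

open Filter Matrix
open scoped Classical ComplexOrder

noncomputable section

section Defs

variable {ι : Type*} [Fintype ι] [DecidableEq ι]

/-- A density operator: a positive semidefinite operator with unit trace. -/
def IsDensityOp (A : Matrix ι ι ℂ) : Prop := A.PosSemidef ∧ A.trace = 1

/-- A test (POVM element): an operator `T` with `0 ≤ T ≤ I`. -/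
def IsTest (T : Matrix ι ι ℂ) : Prop :=
  T.PosSemidef ∧ ((1 : Matrix ι ι ℂ) - T).PosSemidef

/-- An orthogonal projection: a Hermitian idempotent operator. -/
def IsOrthProj (P : Matrix ι ι ℂ) : Prop := P.IsHermitian ∧ P * P = P

/-- The orthogonal projection `{X ≥ 0}` onto the direct sum of eigenspaces of a Hermitian `X`
with nonnegative eigenvalues (junk value `0` if `X` is not Hermitian). -/
def nnProj (X : Matrix ι ι ℂ) : Matrix ι ι ℂ :=
  if hX : X.IsHermitian then
    (hX.eigenvectorUnitary : Matrix ι ι ℂ) *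
      (Matrix.diagonal fun i => if 0 ≤ hX.eigenvalues i then (1 : ℂ) else 0) *
      star (hX.eigenvectorUnitary : Matrix ι ι ℂ)
  else 0

/-- The type-I error `Tr[(I - {ρ - μ σ ≥ 0}) ρ]` of the spectral test. -/
def specErr (ρ σ : Matrix ι ι ℂ) (μ : ℝ) : ℝ :=
  (((1 : Matrix ι ι ℂ) - nnProj (ρ - (μ : ℂ) • σ)) * ρ).trace.re

/-- Optimal ε-achievable type-II error `β_ε(ρ‖S)` against a set `S` of states. -/
def betaSet (ε : ℝ) (ρ : Matrix ι ι ℂ) (S : Set (Matrix ι ι ℂ)) : ℝ :=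
  sInf {x : ℝ | ∃ T : Matrix ι ι ℂ, IsTest T ∧
    (((1 : Matrix ι ι ℂ) - T) * ρ).trace.re ≤ ε ∧
    x = sSup {y : ℝ | ∃ σ ∈ S, y = (T * σ).trace.re}}

/-- `log` of a Hermitian matrix via the functional calculus (with `Real.log 0 = 0`
on the kernel); junk value `0` if not Hermitian. -/
def hermLog (X : Matrix ι ι ℂ) : Matrix ι ι ℂ :=
  if hX : X.IsHermitian then
    (hX.eigenvectorUnitary : Matrix ι ι ℂ) *
      (Matrix.diagonal fun i => (Real.log (hX.eigenvalues i) : ℂ)) *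
      star (hX.eigenvectorUnitary : Matrix ι ι ℂ)
  else 0

/-- Support inclusion `supp ρ ⊆ supp σ`, expressed as kernel inclusion `ker σ ⊆ ker ρ`. -/
def SuppLE (ρ σ : Matrix ι ι ℂ) : Prop :=
  ∀ v : ι → ℂ, σ.mulVec v = 0 → ρ.mulVec v = 0

/-- Umegaki quantum relative entropy `D(ρ‖σ) = Tr[ρ(log ρ - log σ)]` if `supp ρ ⊆ supp σ`,
and `+∞` otherwise. -/
def relEnt (ρ σ : Matrix ι ι ℂ) : EReal :=
  if SuppLE ρ σ then (((ρ * (hermLog ρ - hermLog σ)).trace.re : ℝ) : EReal) else ⊤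

/-- The spectral projection of a Hermitian matrix onto the eigenspace of eigenvalue `μ`. -/
def eigProjAt (X : Matrix ι ι ℂ) (μ : ℝ) : Matrix ι ι ℂ :=
  if hX : X.IsHermitian then
    (hX.eigenvectorUnitary : Matrix ι ι ℂ) *
      (Matrix.diagonal fun i => if hX.eigenvalues i = μ then (1 : ℂ) else 0) *
      star (hX.eigenvectorUnitary : Matrix ι ι ℂ)
  else 0

/-- The number of distinct eigenvalues of a Hermitian matrix. -/
def distinctEigCount (X : Matrix ι ι ℂ) : ℕ :=
  if hX : X.IsHermitian then (Finset.univ.image hX.eigenvalues).card else 0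

/-- The pinching map with respect to `σ`: `ρ ↦ Σ_μ Π_μ ρ Π_μ` over the distinct
eigenvalues `μ` of `σ`. -/
def pinch (σ ρ : Matrix ι ι ℂ) : Matrix ι ι ℂ :=
  if hσ : σ.IsHermitian then
    ∑ μ ∈ Finset.univ.image hσ.eigenvalues, eigProjAt σ μ * ρ * eigProjAt σ μ
  else ρ

/-- The amplification `id_k ⊗ Φ` of a linear map on operators. -/
def ampl (k : ℕ) (Φ : Matrix ι ι ℂ →ₗ[ℂ] Matrix ι ι ℂ)
    (M : Matrix (Fin k × ι) (Fin k × ι) ℂ) : Matrix (Fin k × ι) (Fin k × ι) ℂ :=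
  Matrix.of fun p q => Φ (Matrix.of fun x y => M (p.1, x) (q.1, y)) p.2 q.2

/-- Complete positivity: every amplification `id_k ⊗ Φ` maps positive semidefinite
operators to positive semidefinite operators. -/
def IsCP (Φ : Matrix ι ι ℂ →ₗ[ℂ] Matrix ι ι ℂ) : Prop :=
  ∀ k : ℕ, ∀ M : Matrix (Fin k × ι) (Fin k × ι) ℂ, M.PosSemidef → (ampl k Φ M).PosSemidef

/-- Trace preservation. -/
def IsTP (Φ : Matrix ι ι ℂ →ₗ[ℂ] Matrix ι ι ℂ) : Prop :=
  ∀ X : Matrix ι ι ℂ, (Φ X).trace = X.trace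

end Defs

section SeqDefs

variable {Hn : ℕ → Type*} [∀ n, Fintype (Hn n)] [∀ n, DecidableEq (Hn n)]

/-- The spectral inf-divergence rate `D̲(ε|ρ⃗‖σ⃗)`. -/
def Dlow (ε : ℝ) (ρ σ : (n : ℕ) → Matrix (Hn n) (Hn n) ℂ) : EReal :=
  sSup ((fun a : ℝ => (a : EReal)) ''
    {a : ℝ | Filter.limsup
      (fun n : ℕ => specErr (ρ n) (σ n) (Real.exp (n * a))) Filter.atTop ≤ ε})

/-- The supremum ε-achievable type-II error exponent `B(ε|ρ⃗‖σ⃗)`. -/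
def Bexp (ε : ℝ) (ρ σ : (n : ℕ) → Matrix (Hn n) (Hn n) ℂ) : EReal :=
  sSup {x : EReal | ∃ T : (n : ℕ) → Matrix (Hn n) (Hn n) ℂ,
    (∀ n, IsTest (T n)) ∧
    Filter.limsup
      (fun n : ℕ => (((1 : Matrix (Hn n) (Hn n) ℂ) - T n) * ρ n).trace.re)
      Filter.atTop ≤ ε ∧
    x = Filter.liminf
      (fun n : ℕ => ((↑(-(1 / (n : ℝ)) * Real.log ((T n * σ n).trace.re))) : EReal))
      Filter.atTop}

end SeqDefs

section TensorDefs

variable {H : Type*} [Fintype H] [DecidableEq H]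

/-- The IID tensor power `A^{⊗n}`, acting on `H^{⊗n}` modeled with index type `Fin n → H`. -/
def tpow (A : Matrix H H ℂ) (n : ℕ) : Matrix (Fin n → H) (Fin n → H) ℂ :=
  Matrix.of fun x y => ∏ k : Fin n, A (x k) (y k)

/-- Tensor product of operators on `H^{⊗n}` and `H^{⊗m}`, as an operator on `H^{⊗(n+m)}`. -/
def mTensor {n m : ℕ} (A : Matrix (Fin n → H) (Fin n → H) ℂ)
    (B : Matrix (Fin m → H) (Fin m → H) ℂ) :
    Matrix (Fin (n + m) → H) (Fin (n + m) → H) ℂ :=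
  Matrix.of fun x y =>
    A (fun k => x (Fin.castAdd m k)) (fun k => y (Fin.castAdd m k)) *
      B (fun k => x (Fin.natAdd n k)) (fun k => y (Fin.natAdd n k))

end TensorDefs

/-- Classical spectral inf-divergence rate (with vanishing type-I error) for sequences of
(finitely supported) distributions on `ℕ`. -/
def cDlow (ρ σ : ℕ → ℕ → ℝ) : EReal :=
  sSup ((fun a : ℝ => (a : EReal)) ''
    {a : ℝ | Filter.limsup
      (fun n : ℕ => ∑' x : ℕ, if ρ n x < Real.exp (n * a) * σ n x then ρ n x else 0)
      Filter.atTop = 0})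
section AuxCS
variable {ι : Type*} [Fintype ι] [DecidableEq ι]

open scoped MatrixOrder in
noncomputable def Matrix.PosSemidef.sqrt {M : Matrix ι ι ℂ} (_hM : M.PosSemidef) :
    Matrix ι ι ℂ := CFC.sqrt M

open scoped MatrixOrder in
lemma Matrix.PosSemidef.posSemidef_sqrt {M : Matrix ι ι ℂ} (hM : M.PosSemidef) :
    hM.sqrt.PosSemidef := (CFC.sqrt_nonneg M).posSemidef

open scoped MatrixOrder in
lemma Matrix.PosSemidef.sqrt_mul_self {M : Matrix ι ι ℂ} (hM : M.PosSemidef) :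
    hM.sqrt * hM.sqrt = M := CFC.sqrt_mul_sqrt_self M hM.nonneg

lemma diag_nonneg' {M : Matrix ι ι ℂ} (hM : M.PosSemidef) (i : ι) : 0 ≤ (M i i).re := by
  have h := hM.dotProduct_mulVec_nonneg (Pi.single i 1)
  have he : star (Pi.single i 1) ⬝ᵥ M.mulVec (Pi.single i 1) = M i i := by
    simp [Matrix.mulVec_single, dotProduct, Pi.single_apply, apply_ite]
  rw [he] at h
  exact (Complex.nonneg_iff.mp h).1

lemma trace_re_nonneg' {M : Matrix ι ι ℂ} (hM : M.PosSemidef) : 0 ≤ M.trace.re := by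
  rw [Matrix.trace, Complex.re_sum]
  exact Finset.sum_nonneg fun i _ => diag_nonneg' hM i

lemma trace_ctm (A B : Matrix ι ι ℂ) :
    (Aᴴ * B).trace = ∑ p : ι × ι, (starRingEnd ℂ) (A p.1 p.2) * B p.1 p.2 := by
  rw [Matrix.trace, Fintype.sum_prod_type]
  simp [Matrix.mul_apply, Matrix.diag, Matrix.conjTranspose_apply]
  rw [Finset.sum_comm]

lemma trace_ctm_self (A : Matrix ι ι ℂ) :
    (Aᴴ * A).trace.re = ∑ p : ι × ι, ‖A p.1 p.2‖ ^ 2 := by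
  rw [trace_ctm, Complex.re_sum]
  congr 1; ext p
  rw [Complex.conj_mul', ← Complex.ofReal_pow, Complex.ofReal_re]

lemma cs_trace (A B : Matrix ι ι ℂ) :
    ‖(Aᴴ * B).trace‖ ≤ Real.sqrt ((Aᴴ * A).trace.re) * Real.sqrt ((Bᴴ * B).trace.re) := by
  let f : EuclideanSpace ℂ (ι × ι) := WithLp.toLp 2 (fun p : ι × ι => A p.1 p.2)
  let g : EuclideanSpace ℂ (ι × ι) := WithLp.toLp 2 (fun p : ι × ι => B p.1 p.2)
  have h1 : (Aᴴ * B).trace = inner ℂ f g := by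
    rw [trace_ctm, PiLp.inner_apply]
    refine Finset.sum_congr rfl fun p _ => ?_
    simp [f, g, mul_comm]
  have h2 : Real.sqrt ((Aᴴ * A).trace.re) = ‖f‖ := by
    rw [trace_ctm_self, EuclideanSpace.norm_eq]
  have h3 : Real.sqrt ((Bᴴ * B).trace.re) = ‖g‖ := by
    rw [trace_ctm_self, EuclideanSpace.norm_eq]
  rw [h1, h2, h3]
  exact norm_inner_le_norm f g

lemma tr_RXR {ρ : Matrix ι ι ℂ} (hρ : ρ.PosSemidef) (X : Matrix ι ι ℂ) :
    (hρ.sqrt * X * hρ.sqrt).trace = (X * ρ).trace := by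
  rw [Matrix.trace_mul_cycle, hρ.sqrt_mul_self, Matrix.trace_mul_comm]

lemma trace_pair_nonneg {X ρ : Matrix ι ι ℂ} (hX : X.PosSemidef) (hρ : ρ.PosSemidef) :
    0 ≤ (X * ρ).trace.re := by
  rw [← tr_RXR hρ X]
  refine trace_re_nonneg' ?_
  have h := hX.conjTranspose_mul_mul_same hρ.sqrt
  rwa [hρ.posSemidef_sqrt.1] at h

end AuxCS

/-- **Operator inequality from Cauchy–Schwarz.** If `0 ≤ T ≤ I`, `P` is an orthogonal
projection, `c ∈ [0,1]` and `P T P ≤ c P`, then for every density operator `ρ`,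
`Tr[Tρ] ≤ (√(c Tr[Pρ]) + √(1 − Tr[Pρ]))²`. -/
theorem stmt5 {ι : Type*} [Fintype ι] [DecidableEq ι]
    (T P : Matrix ι ι ℂ) (c : ℝ)
    (hT : IsTest T) (hP : IsOrthProj P)
    (hc0 : 0 ≤ c) (hc1 : c ≤ 1)
    (hPTP : ((c : ℂ) • P - P * T * P).PosSemidef)
    (ρ : Matrix ι ι ℂ) (hρ : IsDensityOp ρ) :
    (T * ρ).trace.re
      ≤ (Real.sqrt (c * (P * ρ).trace.re) + Real.sqrt (1 - (P * ρ).trace.re)) ^ 2 := by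
  obtain ⟨hTps, hTle⟩ := hT
  obtain ⟨hPh, hPi⟩ := hP
  obtain ⟨hρps, hρtr⟩ := hρ
  set Q : Matrix ι ι ℂ := 1 - P with hQdef
  have hQh : Q.IsHermitian := by
    unfold Q
    simp [Matrix.IsHermitian, Matrix.conjTranspose_sub, hPh.eq]
  have hQi : Q * Q = Q := by
    unfold Q
    simp [Matrix.sub_mul, Matrix.mul_sub, hPi]
  have hPQ : P + Q = 1 := by unfold Q; abel
  have hPps : P.PosSemidef := by
    have h := Matrix.posSemidef_conjTranspose_mul_self P
    rwa [hPh.eq, hPi] at h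
  have hQps : Q.PosSemidef := by
    have h := Matrix.posSemidef_conjTranspose_mul_self Q
    rwa [hQh.eq, hQi] at h
  set R : Matrix ι ι ℂ := hρps.sqrt with hRdef
  set S : Matrix ι ι ℂ := hTps.sqrt with hSdef
  have hRh : Rᴴ = R := hρps.posSemidef_sqrt.1
  have hSh : Sᴴ = S := hTps.posSemidef_sqrt.1
  have hSS : S * S = T := hTps.sqrt_mul_self
  set A : Matrix ι ι ℂ := S * P * R with hAdef
  set B : Matrix ι ι ℂ := S * Q * R with hBdef
  have hA' : Aᴴ = R * P * S := by
    unfold A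
    rw [Matrix.conjTranspose_mul, Matrix.conjTranspose_mul, hRh, hPh.eq, hSh,
      ← Matrix.mul_assoc]
  have hB' : Bᴴ = R * Q * S := by
    unfold B
    rw [Matrix.conjTranspose_mul, Matrix.conjTranspose_mul, hRh, hQh.eq, hSh,
      ← Matrix.mul_assoc]
  have haa : (Aᴴ * A).trace = ((P * T * P) * ρ).trace := by
    have h1 : Aᴴ * A = R * (P * (S * S) * P) * R := by
      rw [hA', hAdef]; simp only [Matrix.mul_assoc]
    rw [h1, hSS, tr_RXR hρps]
  have hbb : (Bᴴ * B).trace = ((Q * T * Q) * ρ).trace := by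
    have h1 : Bᴴ * B = R * (Q * (S * S) * Q) * R := by
      rw [hB', hBdef]; simp only [Matrix.mul_assoc]
    rw [h1, hSS, tr_RXR hρps]
  -- total trace decomposition
  have hABsum : A + B = S * R := by
    unfold A B
    rw [← Matrix.add_mul, ← Matrix.mul_add, hPQ, Matrix.mul_one]
  have htr : (T * ρ).trace = ((A + B)ᴴ * (A + B)).trace := by
    rw [hABsum, Matrix.conjTranspose_mul, hRh, hSh]
    have h1 : R * S * (S * R) = R * (S * S) * R := by simp only [Matrix.mul_assoc]
    rw [h1, hSS, tr_RXR hρps]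
  have hsum : (T * ρ).trace
      = (Aᴴ * A).trace + (Aᴴ * B).trace + (Bᴴ * A).trace + (Bᴴ * B).trace := by
    rw [htr]
    simp only [Matrix.conjTranspose_add, Matrix.add_mul, Matrix.mul_add, Matrix.trace_add]
    ring
  have hba : (Bᴴ * A).trace.re = (Aᴴ * B).trace.re := by
    have h1 : Bᴴ * A = (Aᴴ * B)ᴴ := by
      rw [Matrix.conjTranspose_mul Aᴴ B, Matrix.conjTranspose_conjTranspose]
    rw [h1, Matrix.trace_conjTranspose]
    exact Complex.conj_re _
  set p : ℝ := (P * ρ).trace.re with hpdef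
  set a : ℝ := (Aᴴ * A).trace.re with hadef
  set b : ℝ := (Bᴴ * B).trace.re with hbdef
  set z : ℂ := (Aᴴ * B).trace with hzdef
  have hkey : (T * ρ).trace.re = a + 2 * z.re + b := by
    rw [hadef, hbdef, hzdef, hsum]
    simp only [Complex.add_re]
    rw [hba]; ring
  -- bounds
  have ha0 : 0 ≤ a := by
    rw [hadef, trace_ctm_self]
    exact Finset.sum_nonneg fun i _ => sq_nonneg _
  have hb0 : 0 ≤ b := by
    rw [hbdef, trace_ctm_self]
    exact Finset.sum_nonneg fun i _ => sq_nonneg _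
  have hp0 : 0 ≤ p := trace_pair_nonneg hPps hρps
  have hQρ : (Q * ρ).trace.re = 1 - p := by
    unfold Q p
    rw [Matrix.sub_mul, Matrix.one_mul, Matrix.trace_sub, Complex.sub_re, hρtr]
    simp
  have hq0 : 0 ≤ 1 - p := hQρ ▸ trace_pair_nonneg hQps hρps
  have ha : a ≤ c * p := by
    have h := trace_pair_nonneg hPTP hρps
    rw [Matrix.sub_mul, Matrix.trace_sub, Complex.sub_re, Matrix.smul_mul,
      Matrix.trace_smul, smul_eq_mul, Complex.re_ofReal_mul] at h
    rw [hadef, haa]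
    linarith
  have hQ1 : (Q - Q * T * Q).PosSemidef := by
    have h := hTle.conjTranspose_mul_mul_same Q
    rw [hQh.eq] at h
    have h2 : Q * (1 - T) * Q = Q - Q * T * Q := by
      rw [Matrix.mul_sub Q 1 T, Matrix.mul_one, Matrix.sub_mul Q (Q * T) Q, hQi]
    rwa [h2] at h
  have hb : b ≤ 1 - p := by
    have h := trace_pair_nonneg hQ1 hρps
    rw [Matrix.sub_mul, Matrix.trace_sub, Complex.sub_re] at h
    rw [hbdef, hbb]
    rw [hQρ] at h
    linarith
  have hcp0 : 0 ≤ c * p := mul_nonneg hc0 hp0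
  have hz : z.re ≤ Real.sqrt (c * p) * Real.sqrt (1 - p) := by
    have h1 : z.re ≤ ‖z‖ := Complex.re_le_norm z
    have h2 := cs_trace A B
    have h3 : Real.sqrt a * Real.sqrt b ≤ Real.sqrt (c * p) * Real.sqrt (1 - p) :=
      mul_le_mul (Real.sqrt_le_sqrt ha) (Real.sqrt_le_sqrt hb) (Real.sqrt_nonneg _)
        (Real.sqrt_nonneg _)
    calc z.re ≤ ‖z‖ := h1
      _ ≤ Real.sqrt a * Real.sqrt b := h2
      _ ≤ _ := h3
  rw [add_sq, Real.sq_sqrt hcp0, Real.sq_sqrt hq0]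
  linarith
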